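/- Two LPMLN programs P and Q are semi-strongly equivalent (i.e., for every LPMLN program R, the programs P ∪ R and Q ∪ R have the same stable models) if and only if P and Q have the same SE-models. -/

import Mathlib

open scoped Classical

noncomputable section

namespace LPMLN

/-- A ground literal: an atom (numbered by `ℕ`) or its classical negation. -/
inductive Lit where
  | pos : ℕ → Lit
  | neg : ℕ → Lit
deriving DecidableEq

/-- The complementary literal. -/
def Lit.compl : Lit → Lit
  | .pos a => .neg a
  | .neg a => .pos a

/-- A finite set of literals is consistent if it contains no complementary pair. -/
def Consistent (I : Finset Lit) : Prop := ∀ l ∈ I, l.compl ∉ I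

/-- An ASP rule, given by its head, positive body and negative body. -/
structure Rule where
  head : Finset Lit
  pos : Finset Lit
  neg : Finset Lit
deriving DecidableEq

/-- The literals occurring in a rule. -/
def Rule.lits (r : Rule) : Finset Lit := r.head ∪ r.pos ∪ r.neg

/-- Satisfaction of a rule by a set of literals. -/
def Sat (I : Finset Lit) (r : Rule) : Prop :=
  r.pos ⊆ I → r.neg ∩ I = ∅ → (r.head ∩ I).Nonempty

/-- Satisfaction of an ASP program. -/
def SatProg (I : Finset Lit) (prog : Finset Rule) : Prop := ∀ r ∈ prog, Sat I r

/-- The GL-reduct of an ASP program w.r.t. an interpretation. -/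
def glReduct (prog : Finset Rule) (I : Finset Lit) : Finset Rule :=
  (prog.filter fun r => r.neg ∩ I = ∅).image fun r => ⟨r.head, r.pos, ∅⟩

/-- `I` is a stable model of the ASP program `prog`: `I` is a consistent set of
literals satisfying the GL-reduct, no proper subset of which satisfies the GL-reduct. -/
def AspStable (prog : Finset Rule) (I : Finset Lit) : Prop :=
  Consistent I ∧ SatProg I (glReduct prog I) ∧ ∀ J ⊂ I, ¬ SatProg J (glReduct prog I)

/-- A weight: a real number (soft rule) or the symbol `α` (hard rule). -/
inductive Weight where
  | soft : ℝ → Weight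
  | hard : Weight

/-- The real value of a soft weight (hard weights get the dummy value 0). -/
def Weight.val : Weight → ℝ
  | .soft w => w
  | .hard => 0

/-- A weighted rule `w : r`. -/
structure WRule where
  w : Weight
  r : Rule

/-- An LPMLN program: a finite set of weighted rules. -/
abbrev Program := Finset WRule

/-- The LPMLN reduct `P_I`: the rules of `P` satisfied by `I`. -/
def reduct (P : Program) (I : Finset Lit) : Program := P.filter fun wr => Sat I wr.r

/-- The unweighted ASP counterpart of an LPMLN program. -/
def unweighted (P : Program) : Finset Rule := P.image fun wr => wr.r

/-- `I` is a stable model of the LPMLN program `P`: `I` is a stable model of the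
unweighted ASP counterpart of the LPMLN reduct `P_I`. -/
def Stable (P : Program) (I : Finset Lit) : Prop :=
  AspStable (unweighted (reduct P I)) I

/-- The literals occurring in an LPMLN program. -/
def litset (P : Program) : Finset Lit := P.biUnion fun wr => wr.r.lits

/-- `(X, Y)` is an SE-interpretation: a pair of interpretations with `X ⊆ Y`. -/
def SEInterp (X Y : Finset Lit) : Prop := Consistent X ∧ Consistent Y ∧ X ⊆ Y

/-- `(X, Y)` is an SE-model of the LPMLN program `P`: an SE-interpretation such that
`X` satisfies the GL-reduct (w.r.t. `Y`) of the unweighted version of `P_Y`. -/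
def SEModel (P : Program) (X Y : Finset Lit) : Prop :=
  SEInterp X Y ∧ SatProg X (glReduct (unweighted (reduct P Y)) Y)

/-- The number of hard rules of `P` satisfied by `I`. -/
def hardCount (P : Program) (I : Finset Lit) : ℕ :=
  ((reduct P I).filter fun wr => wr.w = Weight.hard).card

/-- The sum of the weights of the soft rules of `P` satisfied by `I`. -/
def softWeight (P : Program) (I : Finset Lit) : ℝ :=
  ∑ wr ∈ ((reduct P I).filter fun wr => wr.w ≠ Weight.hard), wr.w.val

/-- The weight degree `W(P, I) = exp(Σ_{w:r ∈ P_I} w)`, viewed as the real-valued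
function `A ↦ exp(c' + k'·A)` of the value `A` given to the symbol `α`, where `k'` is
the number of hard rules of `P` satisfied by `I` and `c'` the sum of the weights of the
soft rules of `P` satisfied by `I`. -/
def wdeg (P : Program) (I : Finset Lit) (A : ℝ) : ℝ :=
  Real.exp (softWeight P I + A * hardCount P I)

/-- The (finite) set of stable models of `P` (every stable model of `P` is a subset of
`litset P`). -/
def SMset (P : Program) : Finset (Finset Lit) :=
  (litset P).powerset.filter fun I => Stable P I

/-- The probability degree `Pr(P, I)`: the limit, as `α → ∞`, of
`W(P, I) / Σ_{I' ∈ SM(P)} W(P, I')` if `I` is a stable model of `P`, and `0` otherwise. -/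
def PrDeg (P : Program) (I : Finset Lit) : ℝ :=
  if Stable P I then
    Filter.limUnder Filter.atTop fun A => wdeg P I A / ∑ I' ∈ SMset P, wdeg P I' A
  else 0

/-- `I` is a probabilistic stable model of `P`: a stable model of `P` satisfying the
maximum number of hard rules of `P` (equivalently, with nonzero probability degree). -/
def PStable (P : Program) (I : Finset Lit) : Prop :=
  Stable P I ∧ ∀ J, Stable P J → hardCount P J ≤ hardCount P I

/-- Semi-strong equivalence: the extensions by any LPMLN program have the same
stable models. -/
def SemiStrongEq (P Q : Program) : Prop :=
  ∀ R : Program, ∀ I, Stable (P ∪ R) I ↔ Stable (Q ∪ R) I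

/-- p-ordinary equivalence: same stable models and same probability degrees. -/
def POrdEq (P Q : Program) : Prop :=
  (∀ I, Stable P I ↔ Stable Q I) ∧ ∀ I, Stable P I → PrDeg P I = PrDeg Q I

/-- p-strong equivalence: p-ordinary equivalence under every extension. -/
def PStrongEq (P Q : Program) : Prop := ∀ R : Program, POrdEq (P ∪ R) (Q ∪ R)

/-- Comparison of the symbolic weight degrees of two interpretations w.r.t. `P`:
`exp(c + k·α) ≤ exp(c' + k'·α)` iff `k < k'`, or `k = k'` and `c ≤ c'`. -/
def WLe (P : Program) (I J : Finset Lit) : Prop :=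
  hardCount P I < hardCount P J ∨
    (hardCount P I = hardCount P J ∧ softWeight P I ≤ softWeight P J)

/-- q-strong equivalence: same stable models under every extension, with
order-preserving weight degrees. -/
def QStrongEq (P Q : Program) : Prop :=
  ∀ R : Program,
    (∀ I, Stable (P ∪ R) I ↔ Stable (Q ∪ R) I) ∧
    ∀ X Y, Stable (P ∪ R) X → Stable (P ∪ R) Y → (WLe (P ∪ R) X Y ↔ WLe (Q ∪ R) X Y)

/-- A soft stable model of `P`: a stable model of `P` satisfying all hard rules of `P`. -/
def SoftStable (P : Program) (I : Finset Lit) : Prop :=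
  Stable P I ∧ ∀ wr ∈ P, wr.w = Weight.hard → Sat I wr.r

/-- A soft SE-model of `P`: an SE-model `(X, Y)` of `P` such that `Y` satisfies all
hard rules of `P`. -/
def SoftSEModel (P : Program) (X Y : Finset Lit) : Prop :=
  SEModel P X Y ∧ ∀ wr ∈ P, wr.w = Weight.hard → Sat Y wr.r

/-- The (finite) set of soft stable models of `P`. -/
def SSMset (P : Program) : Finset (Finset Lit) :=
  (litset P).powerset.filter fun I => SoftStable P I

/-- The probability degree under the soft stable model semantics:
`Pr_s(P, X) = W_s(P, X) / Σ_{X' ∈ SSM(P)} W_s(P, X')`, where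
`W_s(P, X) = exp(Σ_{w:r ∈ P^s, X ⊨ r} w)`. -/
def PrS (P : Program) (X : Finset Lit) : ℝ :=
  Real.exp (softWeight P X) / ∑ X' ∈ SSMset P, Real.exp (softWeight P X')

/-- sp-strong equivalence: p-strong equivalence under the soft stable model
semantics. -/
def SPStrongEq (P Q : Program) : Prop :=
  ∀ R : Program,
    (∀ I, SoftStable (P ∪ R) I ↔ SoftStable (Q ∪ R) I) ∧
    ∀ X, SoftStable (P ∪ R) X → PrS (P ∪ R) X = PrS (Q ∪ R) X

/-- `(X, Y)` is a UE-model of `P`: an SE-model with `X = Y`, or with `X ⊊ Y` such that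
no `X'` strictly between `X` and `Y` gives an SE-model `(X', Y)`. -/
def UEModel (P : Program) (X Y : Finset Lit) : Prop :=
  SEModel P X Y ∧
    (X = Y ∨ (X ⊂ Y ∧ ∀ X', X ⊂ X' → X' ⊂ Y → ¬ SEModel P X' Y))

/-- A program consisting of weighted facts only (rules with empty bodies). -/
def IsFactProg (R : Program) : Prop := ∀ wr ∈ R, wr.r.pos = ∅ ∧ wr.r.neg = ∅

/-- p-uniform equivalence: p-ordinary equivalence under every extension by a set of
weighted facts. -/
def PUniformEq (P Q : Program) : Prop :=
  ∀ R : Program, IsFactProg R → POrdEq (P ∪ R) (Q ∪ R)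

/-- The flattening rules `R(X, Y, a)`: the two hard rules
`α : ← X, not Y, a` and `α : a ← X, not Y`. -/
def flatten (X Y : Finset Lit) (a : ℕ) : Program :=
  {⟨Weight.hard, ⟨∅, X ∪ {Lit.pos a}, Y⟩⟩, ⟨Weight.hard, ⟨{Lit.pos a}, X, Y⟩⟩}

/-- The hard fact `α : l`. -/
def factOf (l : Lit) : WRule := ⟨Weight.hard, ⟨{l}, ∅, ∅⟩⟩

/-- The base flattening extension `E⁰(P, U) = P ∪ {α : a | a ∈ U}`. -/
def E0 (P : Program) (U : Finset Lit) : Program := P ∪ U.image factOf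

/-- `IsFlatExt P U k E` holds iff `E` is a flattening extension `E^k(P, U)`:
`E⁰(P, U) = P ∪ {α : a | a ∈ U}` and `E^{i+1}(P, U) = E^i(P, U) ∪ R(X ∩ U, U − X, c)`
where `X` is a probabilistic stable model of `E^i(P, U)` and `c` is a fresh atom. -/
inductive IsFlatExt (P : Program) (U : Finset Lit) : ℕ → Program → Prop
  | zero : IsFlatExt P U 0 (E0 P U)
  | succ {i : ℕ} {E : Program} {X : Finset Lit} {c : ℕ} :
      IsFlatExt P U i E → PStable E X →
      Lit.pos c ∉ litset E → Lit.neg c ∉ litset E →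
      IsFlatExt P U (i + 1) (E ∪ flatten (X ∩ U) (U \ X) c)

lemma consistent_of_subset {J I : Finset Lit} (h : J ⊆ I) (hI : Consistent I) :
    Consistent J := fun l hl hc => hI l (h hl) (h hc)

lemma satProg_union {J : Finset Lit} {A B : Finset Rule} :
    SatProg J (A ∪ B) ↔ SatProg J A ∧ SatProg J B := by
  constructor
  · exact fun h => ⟨fun r hr => h r (Finset.mem_union_left _ hr),
      fun r hr => h r (Finset.mem_union_right _ hr)⟩
  · rintro ⟨h1, h2⟩ r hr
    rcases Finset.mem_union.1 hr with h | h
    · exact h1 r h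
    · exact h2 r h

lemma glReduct_union (P R : Program) (I : Finset Lit) :
    glReduct (unweighted (reduct (P ∪ R) I)) I =
      glReduct (unweighted (reduct P I)) I ∪ glReduct (unweighted (reduct R I)) I := by
  simp [glReduct, unweighted, reduct, Finset.filter_union, Finset.image_union]

lemma mem_glr {P : Program} {I : Finset Lit} {r : Rule} :
    r ∈ glReduct (unweighted (reduct P I)) I ↔
      ∃ wr ∈ P, Sat I wr.r ∧ wr.r.neg ∩ I = ∅ ∧ r = ⟨wr.r.head, wr.r.pos, ∅⟩ := by
  simp only [glReduct, unweighted, reduct, Finset.mem_image, Finset.mem_filter]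
  constructor
  · rintro ⟨r0, ⟨⟨wr, ⟨hwr, hsat⟩, rfl⟩, hneg⟩, rfl⟩
    exact ⟨wr, hwr, hsat, hneg, rfl⟩
  · rintro ⟨wr, hwr, hsat, hneg, rfl⟩
    exact ⟨wr.r, ⟨⟨wr, ⟨hwr, hsat⟩, rfl⟩, hneg⟩, rfl⟩

lemma sat_glReduct_self (P : Program) (I : Finset Lit) :
    SatProg I (glReduct (unweighted (reduct P I)) I) := by
  intro r hr
  rw [mem_glr] at hr
  obtain ⟨wr, _, hsat, hneg, rfl⟩ := hr
  intro hpos _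
  exact hsat hpos hneg

lemma stable_iff (P : Program) (I : Finset Lit) :
    Stable P I ↔ Consistent I ∧
      ∀ J ⊂ I, ¬ SatProg J (glReduct (unweighted (reduct P I)) I) :=
  ⟨fun ⟨h1, _, h3⟩ => ⟨h1, h3⟩, fun ⟨h1, h3⟩ => ⟨h1, sat_glReduct_self P I, h3⟩⟩

lemma se_of_sse {P Q : Program} (h : SemiStrongEq P Q) {X Y : Finset Lit}
    (hse : SEModel P X Y) : SEModel Q X Y := by
  obtain ⟨⟨hX, hY, hXY⟩, hsat⟩ := hse
  refine ⟨⟨hX, hY, hXY⟩, ?_⟩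
  by_contra hns
  have hne : X ≠ Y := by rintro rfl; exact hns (sat_glReduct_self Q _)
  have hss : X ⊂ Y := hXY.ssubset_of_ne hne
  set R : Program := X.image factOf ∪
    ((Y \ X) ×ˢ (Y \ X)).image
      (fun p => ⟨Weight.hard, ⟨{p.1}, {p.2}, ∅⟩⟩) with hRdef
  -- membership facts about glReduct of R
  have hfact : ∀ l ∈ X, (⟨{l}, ∅, ∅⟩ : Rule) ∈ glReduct (unweighted (reduct R Y)) Y := by
    intro l hl
    rw [mem_glr]
    refine ⟨factOf l, Finset.mem_union_left _ (Finset.mem_image_of_mem _ hl), ?_, ?_, rfl⟩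
    · intro _ _
      exact ⟨l, Finset.mem_inter.2 ⟨Finset.mem_singleton_self l, hXY hl⟩⟩
    · simp [factOf]
  have hpairmem : ∀ y ∈ Y \ X, ∀ y' ∈ Y \ X,
      (⟨{y}, {y'}, ∅⟩ : Rule) ∈ glReduct (unweighted (reduct R Y)) Y := by
    intro y hy y' hy'
    rw [mem_glr]
    refine ⟨⟨Weight.hard, ⟨{y}, {y'}, ∅⟩⟩, Finset.mem_union_right _ ?_, ?_, ?_, rfl⟩
    · exact Finset.mem_image.2 ⟨(y, y'), Finset.mem_product.2 ⟨hy, hy'⟩, rfl⟩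
    · intro _ _
      exact ⟨y, Finset.mem_inter.2 ⟨Finset.mem_singleton_self y, (Finset.mem_sdiff.1 hy).1⟩⟩
    · simp
  -- Y is a stable model of Q ∪ R
  have hQR : Stable (Q ∪ R) Y := by
    rw [stable_iff, glReduct_union]
    refine ⟨hY, fun J hJ hsatJ => ?_⟩
    rw [satProg_union] at hsatJ
    obtain ⟨hJQ, hJR⟩ := hsatJ
    have hXJ : X ⊆ J := by
      intro l hl
      have h2 := hJR _ (hfact l hl) (Finset.empty_subset _) (Finset.empty_inter _)
      obtain ⟨x, hx⟩ := h2
      obtain ⟨hx1, hx2⟩ := Finset.mem_inter.1 hx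
      exact Finset.mem_singleton.1 hx1 ▸ hx2
    by_cases hd : ∃ y', y' ∈ Y \ X ∧ y' ∈ J
    · obtain ⟨y', hy', hy'J⟩ := hd
      have hYJ : Y ⊆ J := by
        intro y hy
        by_cases hyX : y ∈ X
        · exact hXJ hyX
        · have hym : y ∈ Y \ X := Finset.mem_sdiff.2 ⟨hy, hyX⟩
          have h2 := hJR _ (hpairmem y hym y' hy')
            (Finset.singleton_subset_iff.2 hy'J) (Finset.empty_inter _)
          obtain ⟨x, hx⟩ := h2
          obtain ⟨hx1, hx2⟩ := Finset.mem_inter.1 hx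
          exact Finset.mem_singleton.1 hx1 ▸ hx2
      exact absurd hYJ hJ.2
    · push_neg at hd
      have hJX : J ⊆ X := by
        intro j hj
        by_contra hjX
        exact hd j (Finset.mem_sdiff.2 ⟨hJ.1 hj, hjX⟩) hj
      have : J = X := le_antisymm hJX hXJ
      subst this
      exact hns hJQ
    -- done
  have hPR : Stable (P ∪ R) Y := (h R Y).2 hQR
  rw [stable_iff, glReduct_union] at hPR
  refine hPR.2 X hss ?_
  rw [satProg_union]
  refine ⟨hsat, fun r hr => ?_⟩
  rw [mem_glr] at hr
  obtain ⟨wr, hwr, hsatY, hneg, rfl⟩ := hr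
  rcases Finset.mem_union.1 hwr with hmem | hmem
  · obtain ⟨l, hl, rfl⟩ := Finset.mem_image.1 hmem
    intro _ _
    exact ⟨l, Finset.mem_inter.2 ⟨Finset.mem_singleton_self l, hl⟩⟩
  · obtain ⟨p, hp, rfl⟩ := Finset.mem_image.1 hmem
    intro hpos _
    have hy' : p.2 ∈ X := hpos (Finset.mem_singleton_self p.2)
    have : p.2 ∈ Y \ X := (Finset.mem_product.1 hp).2
    exact absurd hy' (Finset.mem_sdiff.1 this).2

/-- Two LPMLN programs `P` and `Q` are semi-strongly equivalent (i.e., for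
every LPMLN program `R`, the programs `P ∪ R` and `Q ∪ R` have the same stable models)
if and only if `P` and `Q` have the same SE-models. -/
theorem semiStrongEq_iff_same_SEModels (P Q : Program) :
    SemiStrongEq P Q ↔ ∀ X Y, SEModel P X Y ↔ SEModel Q X Y := by
  constructor
  · intro h X Y
    exact ⟨se_of_sse h, se_of_sse (fun R I => (h R I).symm)⟩
  · intro hSE R I
    have key : ∀ J : Finset Lit, Consistent I → J ⊆ I →
        (SatProg J (glReduct (unweighted (reduct P I)) I) ↔
          SatProg J (glReduct (unweighted (reduct Q I)) I)) := by
      intro J hI hJI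
      have hInterp : SEInterp J I := ⟨consistent_of_subset hJI hI, hI, hJI⟩
      constructor
      · intro hs
        exact ((hSE J I).1 ⟨hInterp, hs⟩).2
      · intro hs
        exact ((hSE J I).2 ⟨hInterp, hs⟩).2
    rw [stable_iff, stable_iff, glReduct_union, glReduct_union]
    constructor
    · rintro ⟨hI, hmin⟩
      refine ⟨hI, fun J hJ hsatJ => hmin J hJ ?_⟩
      rw [satProg_union] at hsatJ ⊢
      exact ⟨(key J hI hJ.1).2 hsatJ.1, hsatJ.2⟩
    · rintro ⟨hI, hmin⟩
      refine ⟨hI, fun J hJ hsatJ => hmin J hJ ?_⟩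
      rw [satProg_union] at hsatJ ⊢
      exact ⟨(key J hI hJ.1).1 hsatJ.1, hsatJ.2⟩

end LPMLN
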